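/- If w₀ ∈ M minimizes the functional v ↦ ‖v‖² over M (i.e. ‖w₀‖² ≤ ‖v‖² for all v ∈ M), then ⟨w₀, φ⟩ = ‖w₀‖² · L(φ) for every φ ∈ H. -/

import Mathlib

open RealInnerProductSpace

/-- Euler–Lagrange identity: a minimizer w₀ of v ↦ ‖v‖² over M = {v : L v = 1}
satisfies ⟪w₀, φ⟫ = ‖w₀‖² · L φ for all φ. -/
theorem stmt_11 {H : Type*} [NormedAddCommGroup H] [InnerProductSpace ℝ H]
    [CompleteSpace H] (L : H →L[ℝ] ℝ) (hL : L ≠ 0)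
    {w₀ : H} (hw₀ : L w₀ = 1)
    (hmin : ∀ v : H, L v = 1 → ‖w₀‖ ^ 2 ≤ ‖v‖ ^ 2) :
    ∀ φ : H, ⟪w₀, φ⟫ = ‖w₀‖ ^ 2 * L φ := by
  have key : ∀ ψ : H, L ψ = 0 → ⟪w₀, ψ⟫ = 0 := by
    intro ψ hψ
    by_contra h
    have hψ0 : ψ ≠ 0 := by rintro rfl; simp at h
    have hψp : (0:ℝ) < ‖ψ‖ := norm_pos_iff.mpr hψ0
    have hn : (0:ℝ) < ‖ψ‖ ^ 2 := by positivity
    set a := ⟪w₀, ψ⟫ with ha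
    set t : ℝ := -a / ‖ψ‖ ^ 2 with ht
    have hmem : L (w₀ + t • ψ) = 1 := by simp [hψ, hw₀]
    have hle := hmin _ hmem
    have hexp : ‖w₀ + t • ψ‖ ^ 2 = ‖w₀‖ ^ 2 + 2 * (t * a) + t ^ 2 * ‖ψ‖ ^ 2 := by
      rw [norm_add_sq_real, real_inner_smul_right, norm_smul]
      simp [mul_pow, sq_abs]
      exact Or.inl rfl
    rw [hexp] at hle
    have h2 : 2 * (t * a) + t ^ 2 * ‖ψ‖ ^ 2 = -(a ^ 2 / ‖ψ‖ ^ 2) := by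
      rw [ht]; field_simp
      ring
    have ha2 : 0 < a ^ 2 / ‖ψ‖ ^ 2 := by positivity
    linarith
  intro φ
  have hz : L (φ - L φ • w₀) = 0 := by simp [hw₀]
  have := key _ hz
  rw [inner_sub_right, real_inner_smul_right, real_inner_self_eq_norm_sq] at this
  linarith
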